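/- Let b, μ, ν, σ₁,…,σ₅ > 0 and let N, S, E, I, Q, R > 0 with N = S+E+I+Q+R. Then (b − μN − νI) − (b − μN − νI)/N² + (σ₁²S² + σ₂²E² + σ₃²I² + σ₄²Q² + σ₅²R²)/N³ ≤ ϖ − μ(N + 1/N), where ϖ = b + (1/(4b))·(2μ + ν + σ₁² + σ₂² + σ₃² + σ₄² + σ₅²)². -/

import Mathlib

set_option maxHeartbeats 1000000



private lemma drift_aux (b K N : ℝ) (hb : 0 < b) (hN : 0 < N) :
    -(b / N^2) + K / N ≤ 1 / (4 * b) * K^2 := by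
  have hb4 : (0:ℝ) < 4 * b := by linarith
  have e : -(b / N^2) + K / N = (-b + K * N) / N^2 := by field_simp
  rw [e, div_le_iff₀ (by positivity)]
  have e2 : 1 / (4*b) * K^2 * N^2 = (K^2 * N^2) / (4*b) := by ring
  rw [e2, le_div_iff₀ hb4]
  nlinarith [sq_nonneg (K * N - 2 * b)]

/-- The Lyapunov drift inequality `LV(X) ≤ ϖ − μ (N + 1/N)` for the stochastic
SEIQR model. -/
theorem lyapunov_drift (b μ ν σ1 σ2 σ3 σ4 σ5 S E I Q R : ℝ)
    (hb : 0 < b) (hμ : 0 < μ) (hν : 0 < ν)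
    (hσ1 : 0 < σ1) (hσ2 : 0 < σ2) (hσ3 : 0 < σ3) (hσ4 : 0 < σ4) (hσ5 : 0 < σ5)
    (hS : 0 < S) (hE : 0 < E) (hI : 0 < I) (hQ : 0 < Q) (hR : 0 < R)
    (N : ℝ) (hN : N = S + E + I + Q + R) :
    (b - μ * N - ν * I) - (b - μ * N - ν * I) / N^2
      + (σ1^2 * S^2 + σ2^2 * E^2 + σ3^2 * I^2 + σ4^2 * Q^2 + σ5^2 * R^2) / N^3
    ≤ (b + (1 / (4 * b)) * (2*μ + ν + σ1^2 + σ2^2 + σ3^2 + σ4^2 + σ5^2)^2)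
      - μ * (N + 1 / N) := by
  have hN0 : 0 < N := by rw [hN]; linarith
  have hSN : S ≤ N := by linarith
  have hEN : E ≤ N := by linarith
  have hIN : I ≤ N := by linarith
  have hQN : Q ≤ N := by linarith
  have hRN : R ≤ N := by linarith
  have h1 : (σ1^2 * S^2 + σ2^2 * E^2 + σ3^2 * I^2 + σ4^2 * Q^2 + σ5^2 * R^2) / N^3
      ≤ (σ1^2 + σ2^2 + σ3^2 + σ4^2 + σ5^2) / N := by
    rw [div_le_div_iff₀ (by positivity) hN0]
    have hS2 : σ1^2 * S^2 ≤ σ1^2 * N^2 :=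
      mul_le_mul_of_nonneg_left (pow_le_pow_left₀ hS.le hSN 2) (sq_nonneg σ1)
    have hE2 : σ2^2 * E^2 ≤ σ2^2 * N^2 :=
      mul_le_mul_of_nonneg_left (pow_le_pow_left₀ hE.le hEN 2) (sq_nonneg σ2)
    have hI2 : σ3^2 * I^2 ≤ σ3^2 * N^2 :=
      mul_le_mul_of_nonneg_left (pow_le_pow_left₀ hI.le hIN 2) (sq_nonneg σ3)
    have hQ2 : σ4^2 * Q^2 ≤ σ4^2 * N^2 :=
      mul_le_mul_of_nonneg_left (pow_le_pow_left₀ hQ.le hQN 2) (sq_nonneg σ4)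
    have hR2 : σ5^2 * R^2 ≤ σ5^2 * N^2 :=
      mul_le_mul_of_nonneg_left (pow_le_pow_left₀ hR.le hRN 2) (sq_nonneg σ5)
    nlinarith [hS2, hE2, hI2, hQ2, hR2, hN0, mul_pos hN0 hN0]
  have h2 : -((b - μ * N - ν * I) / N^2) ≤ -(b / N^2) + μ / N + ν / N := by
    have e1 : -((b - μ * N - ν * I) / N^2) = (-b + μ * N + ν * I) / N^2 := by ring
    have e2 : -(b / N^2) + μ / N + ν / N = (-b + μ * N + ν * N) / N^2 := by
      field_simp
    rw [e1, e2]
    apply (div_le_div_iff_of_pos_right (by positivity)).mpr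
    nlinarith
  have h3 : -(ν * I) ≤ 0 := neg_nonpos.mpr (mul_pos hν hI).le
  have h4 : -(b / N^2) + (2*μ + ν + σ1^2 + σ2^2 + σ3^2 + σ4^2 + σ5^2) / N
      ≤ (1 / (4 * b)) * (2*μ + ν + σ1^2 + σ2^2 + σ3^2 + σ4^2 + σ5^2)^2 :=
    drift_aux b _ N hb hN0
  have hgoal : (b - μ * N - ν * I) - (b - μ * N - ν * I) / N^2
      + (σ1^2 * S^2 + σ2^2 * E^2 + σ3^2 * I^2 + σ4^2 * Q^2 + σ5^2 * R^2) / N^3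
      ≤ b - μ * N - ν * I + (-(b / N^2) + μ / N + ν / N)
        + (σ1^2 + σ2^2 + σ3^2 + σ4^2 + σ5^2) / N := by linarith
  have hμN : μ * (N + 1 / N) = μ * N + μ / N := by field_simp
  have hexp : (2*μ + ν + σ1^2 + σ2^2 + σ3^2 + σ4^2 + σ5^2) / N
      = μ / N + ν / N + (σ1^2 + σ2^2 + σ3^2 + σ4^2 + σ5^2) / N + μ / N := by
    field_simp; ring
  linarith [h3, h4, hgoal]
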